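/- Let X and Y be integrable real random variables with X ≤_cx Y, let α ∈ ℝ, and suppose h ∈ [0,1] satisfies h·(x−α) ≤ φ_Y(x) for all x ∈ ℝ, where φ_Y(x) = E[(x−Y)₊]. If h is the largest such value (capped at 1), then F_X(α) ≤ h, where F_X is the cdf of X. -/

import Mathlib

open MeasureTheory Set

/-- If `X ≤_cx Y`, `α ∈ ℝ`, and `h` is the largest value in `[0,1]`
such that `h·(x−α) ≤ φ_Y(x) = E[(x−Y)₊]` for all `x`, then `F_X(α) ≤ h`. -/
theorem cdf_bound_from_convex_order
    {Ω : Type*} [MeasurableSpace Ω] (μ : Measure Ω) [IsProbabilityMeasure μ]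
    (X Y : Ω → ℝ) (hXmeas : Measurable X) (hYmeas : Measurable Y)
    (hX : Integrable X μ) (hY : Integrable Y μ)
    (hcx : ∀ g : ℝ → ℝ, ConvexOn ℝ Set.univ g →
      Integrable (fun ω : Ω => g (X ω)) μ → Integrable (fun ω : Ω => g (Y ω)) μ →
      ∫ ω, g (X ω) ∂μ ≤ ∫ ω, g (Y ω) ∂μ)
    (α : ℝ) (h : ℝ) (hmem : h ∈ Icc (0 : ℝ) 1)
    (hfeas : ∀ x : ℝ, h * (x - α) ≤ ∫ ω, max (x - Y ω) 0 ∂μ)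
    (hmax : ∀ w : ℝ, (∀ x : ℝ, w * (x - α) ≤ ∫ ω, max (x - Y ω) 0 ∂μ) →
      w ≤ h ∨ 1 ≤ h) :
    (μ {ω | X ω ≤ α}).toReal ≤ h := by
  set w := (μ {ω | X ω ≤ α}).toReal with hwdef
  have hsm : MeasurableSet {ω | X ω ≤ α} := hXmeas measurableSet_Iic
  have hw0 : 0 ≤ w := ENNReal.toReal_nonneg
  have hw1 : w ≤ 1 := by
    have h1 : (μ {ω | X ω ≤ α}).toReal ≤ (μ Set.univ).toReal :=
      ENNReal.toReal_mono (measure_ne_top μ _) (measure_mono (subset_univ _))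
    simpa using h1
  have key : ∀ x : ℝ, w * (x - α) ≤ ∫ ω, max (x - Y ω) 0 ∂μ := by
    intro x
    have hnonneg : 0 ≤ ∫ ω, max (x - Y ω) 0 ∂μ :=
      integral_nonneg fun ω => le_max_right _ _
    rcases le_or_gt x α with hx | hx
    · have : w * (x - α) ≤ 0 := mul_nonpos_of_nonneg_of_nonpos hw0 (by linarith)
      linarith
    · have hintX : Integrable (fun ω => max (x - X ω) 0) μ :=
        ((integrable_const x).sub hX).pos_part
      have hintY : Integrable (fun ω => max (x - Y ω) 0) μ :=
        ((integrable_const x).sub hY).pos_part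
      have hconv : ConvexOn ℝ Set.univ (fun t : ℝ => max (x - t) 0) := by
        have h1 : ConvexOn ℝ Set.univ (fun t : ℝ => x - t) := by
          refine ⟨convex_univ, ?_⟩
          intro a _ b _ p q hp hq hpq
          simp only [smul_eq_mul]
          have hq1 : q = 1 - p := by linarith
          subst hq1
          apply le_of_eq
          ring
        exact h1.sup (convexOn_const 0 convex_univ)
      have h1 : w * (x - α) ≤ ∫ ω, max (x - X ω) 0 ∂μ := by
        have heq : ∫ ω, Set.indicator {ω | X ω ≤ α} (fun _ => x - α) ω ∂μ
            = w * (x - α) := by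
          rw [integral_indicator_const _ hsm]
          simp [hwdef, smul_eq_mul, Measure.real]
        rw [← heq]
        refine integral_mono ((integrable_const (x - α)).indicator hsm) hintX ?_
        intro ω
        by_cases hω : X ω ≤ α
        · rw [Set.indicator_of_mem (show ω ∈ {ω | X ω ≤ α} from hω)]
          exact le_max_of_le_left (by linarith)
        · rw [Set.indicator_of_notMem (show ω ∉ {ω | X ω ≤ α} from hω)]
          exact le_max_right _ _
      exact h1.trans (hcx _ hconv hintX hintY)
  rcases hmax w key with h1 | h1
  · exact h1
  · exact hw1.trans h1
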